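/- Let p be a prime number with p ≡ 7 (mod 16) or p ≡ 11 (mod 16). If the polynomial x⁴ + p ∈ ℚ[x] is irreducible over ℚ, then it is 2-superirreducible over ℚ. -/

import Mathlib

open Polynomial

/-! ### ZMod decidable facts -/

private lemma zm16_oo7 : ∀ a b c : ZMod 16, (2*a+1)^4 + 7*(2*b+1)^4 ≠ c^2 := by decide
private lemma zm16_oo11 : ∀ a b c : ZMod 16, (2*a+1)^4 + 11*(2*b+1)^4 ≠ c^2 := by decide
private lemma zm16_eo7 : ∀ a b c : ZMod 16, (2*a)^4 + 7*(2*b+1)^4 ≠ c^2 := by decide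
private lemma zm16_eo11 : ∀ a b c : ZMod 16, (2*a)^4 + 11*(2*b+1)^4 ≠ c^2 := by decide
private lemma zm16_c2_7 : ∀ a e s : ZMod 16, 7*(2*s+1)^4 ≠ (2*a+1)^2 + 4*e^4 := by decide
private lemma zm16_c2_11 : ∀ a e s : ZMod 16, 11*(2*s+1)^4 ≠ (2*a+1)^2 + 4*e^4 := by decide
private lemma zm16_c3_7 : ∀ g a b : ZMod 16,
    4*g^2 ≠ (2*a+1)^4 + 7*(2*b+1)^4 ∧ 4*g^2 ≠ 7*(2*a+1)^4 + (2*b+1)^4 := by decide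
private lemma zm16_c3_11 : ∀ g a b : ZMod 16,
    4*g^2 ≠ (2*a+1)^4 + 11*(2*b+1)^4 ∧ 4*g^2 ≠ 11*(2*a+1)^4 + (2*b+1)^4 := by decide
private lemma zm4_c4 : ∀ a c : ZMod 4, (2*a+1)^2 + (2*c+1)^4 ≠ 0 := by decide

/-- cast p to ZMod 16 -/
private lemma cast_p_16 {p r : ℕ} (h : p % 16 = r) : ((p : ℕ) : ZMod 16) = (r : ZMod 16) := by
  obtain ⟨c, hc⟩ : ∃ c, p = 16*c + r := ⟨p/16, by omega⟩
  subst hc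
  push_cast
  rw [show (16 : ZMod 16) = 0 by decide]
  ring

/-! ### coprime fourth power splitting -/

private lemma pow4_split {u v m : ℕ} (h : Nat.Coprime u v) (he : u * v = m ^ 4) :
    ∃ d, u = d ^ 4 :=
  exists_eq_pow_of_mul_eq_pow (by rw [Nat.isUnit_iff]; exact h) he

private lemma odd_mul' {t s m : ℕ} (hts : t * s = m) (hm : m % 2 = 1) :
    t % 2 = 1 ∧ s % 2 = 1 ∧ 0 < t ∧ 0 < s := by
  have h := Nat.odd_mul.mp (hts ▸ Nat.odd_iff.mpr hm)
  have h1 := Nat.odd_iff.mp h.1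
  have h2 := Nat.odd_iff.mp h.2
  exact ⟨h1, h2, by omega, by omega⟩

private lemma four_eq {t s m : ℕ} (h : t^4 * s^4 = m^4) : t * s = m :=
  Nat.pow_left_injective (by norm_num) (show (t*s)^4 = m^4 by rw [mul_pow]; exact h)

private lemma split3 {P B u v m : ℕ} (hP : P.Prime) (hP2 : P ≠ 2) (hm : m % 2 = 1)
    (hcop : Nat.Coprime u v) (h : u * v = 2 ^ B * (P * m ^ 4)) :
    ∃ s t : ℕ, s % 2 = 1 ∧ t % 2 = 1 ∧ 0 < s ∧ 0 < t ∧
      ((u = 2^B * (P * t^4) ∧ v = s^4) ∨ (u = 2^B * t^4 ∧ v = P * s^4) ∨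
       (u = P * t^4 ∧ v = 2^B * s^4) ∨ (u = t^4 ∧ v = 2^B * (P * s^4))) := by
  have hPdvd : P ∣ u ∨ P ∣ v := hP.dvd_mul.mp ⟨2^B * m^4, by rw [h]; ring⟩
  have h2 : 2^B ∣ u ∨ 2^B ∣ v := by
    by_cases h2u : 2 ∣ u
    · left
      have h2v : ¬ 2 ∣ v := by
        intro h2v
        have : (2:ℕ) ∣ Nat.gcd u v := Nat.dvd_gcd h2u h2v
        rw [hcop] at this; omega
      have hc : Nat.Coprime (2^B) v :=
        Nat.Coprime.pow_left _ ((Nat.Prime.coprime_iff_not_dvd Nat.prime_two).mpr h2v)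
      exact hc.dvd_of_dvd_mul_right ⟨P * m^4, by rw [h]⟩
    · right
      have hc : Nat.Coprime (2^B) u :=
        Nat.Coprime.pow_left _ ((Nat.Prime.coprime_iff_not_dvd Nat.prime_two).mpr h2u)
      exact hc.dvd_of_dvd_mul_left (by rw [h]; exact Dvd.intro _ rfl)
  have hc2P : Nat.Coprime (2^B) P :=
    Nat.Coprime.pow_left _ ((Nat.coprime_primes Nat.prime_two hP).mpr (Ne.symm hP2))
  have hpos : (0:ℕ) < 2^B * P := Nat.mul_pos (pow_pos (by omega) B) hP.pos
  rcases h2 with h2u | h2v <;> rcases hPdvd with hPu | hPv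
  · -- 2^B ∣ u, P ∣ u
    obtain ⟨u₁, hu₁⟩ := hc2P.mul_dvd_of_dvd_of_dvd h2u hPu
    have hkey : u₁ * v = m ^ 4 := by
      apply Nat.eq_of_mul_eq_mul_left hpos
      rw [show 2^B*P*(u₁*v) = (2^B*P*u₁)*v by ring, ← hu₁, h]; ring
    have hcop1 : Nat.Coprime u₁ v :=
      Nat.Coprime.coprime_dvd_left ⟨2^B*P, by rw [hu₁]; ring⟩ hcop
    obtain ⟨t, ht⟩ := pow4_split hcop1 hkey
    obtain ⟨s, hs⟩ := pow4_split hcop1.symm (by rw [mul_comm]; exact hkey)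
    obtain ⟨ht2, hs2, htp, hsp⟩ := odd_mul' (four_eq (t := t) (s := s) (m := m) (by rw [← ht, ← hs]; exact hkey)) hm
    exact ⟨s, t, hs2, ht2, hsp, htp, Or.inl ⟨by rw [hu₁, ht]; ring, hs⟩⟩
  · -- 2^B ∣ u, P ∣ v
    obtain ⟨u₁, hu₁⟩ := h2u
    obtain ⟨v₁, hv₁⟩ := hPv
    have hkey : u₁ * v₁ = m ^ 4 := by
      apply Nat.eq_of_mul_eq_mul_left hpos
      rw [show 2^B*P*(u₁*v₁) = (2^B*u₁)*(P*v₁) by ring, ← hu₁, ← hv₁, h]; ring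
    have hcop1 : Nat.Coprime u₁ v₁ :=
      Nat.Coprime.coprime_dvd_left ⟨2^B, by rw [hu₁]; ring⟩
        (Nat.Coprime.coprime_dvd_right ⟨P, by rw [hv₁]; ring⟩ hcop)
    obtain ⟨t, ht⟩ := pow4_split hcop1 hkey
    obtain ⟨s, hs⟩ := pow4_split hcop1.symm (by rw [mul_comm]; exact hkey)
    obtain ⟨ht2, hs2, htp, hsp⟩ := odd_mul' (four_eq (t := t) (s := s) (m := m) (by rw [← ht, ← hs]; exact hkey)) hm
    exact ⟨s, t, hs2, ht2, hsp, htp, Or.inr (Or.inl ⟨by rw [hu₁, ht], by rw [hv₁, hs]⟩)⟩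
  · -- 2^B ∣ v, P ∣ u
    obtain ⟨u₁, hu₁⟩ := hPu
    obtain ⟨v₁, hv₁⟩ := h2v
    have hkey : u₁ * v₁ = m ^ 4 := by
      apply Nat.eq_of_mul_eq_mul_left hpos
      rw [show 2^B*P*(u₁*v₁) = (P*u₁)*(2^B*v₁) by ring, ← hu₁, ← hv₁, h]; ring
    have hcop1 : Nat.Coprime u₁ v₁ :=
      Nat.Coprime.coprime_dvd_left ⟨P, by rw [hu₁]; ring⟩
        (Nat.Coprime.coprime_dvd_right ⟨2^B, by rw [hv₁]; ring⟩ hcop)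
    obtain ⟨t, ht⟩ := pow4_split hcop1 hkey
    obtain ⟨s, hs⟩ := pow4_split hcop1.symm (by rw [mul_comm]; exact hkey)
    obtain ⟨ht2, hs2, htp, hsp⟩ := odd_mul' (four_eq (t := t) (s := s) (m := m) (by rw [← ht, ← hs]; exact hkey)) hm
    exact ⟨s, t, hs2, ht2, hsp, htp, Or.inr (Or.inr (Or.inl ⟨by rw [hu₁, ht], by rw [hv₁, hs]⟩))⟩
  · -- 2^B ∣ v, P ∣ v
    obtain ⟨v₀, hv₀⟩ := hc2P.mul_dvd_of_dvd_of_dvd h2v hPv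
    have hkey : u * v₀ = m ^ 4 := by
      apply Nat.eq_of_mul_eq_mul_left hpos
      rw [show 2^B*P*(u*v₀) = u*(2^B*P*v₀) by ring, ← hv₀, h]; ring
    have hcop1 : Nat.Coprime u v₀ :=
      Nat.Coprime.coprime_dvd_right ⟨2^B*P, by rw [hv₀]; ring⟩ hcop
    obtain ⟨t, ht⟩ := pow4_split hcop1 hkey
    obtain ⟨s, hs⟩ := pow4_split hcop1.symm (by rw [mul_comm]; exact hkey)
    obtain ⟨ht2, hs2, htp, hsp⟩ := odd_mul' (four_eq (t := t) (s := s) (m := m) (by rw [← ht, ← hs]; exact hkey)) hm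
    exact ⟨s, t, hs2, ht2, hsp, htp, Or.inr (Or.inr (Or.inr ⟨ht, by rw [hv₀, hs]; ring⟩))⟩

private lemma cast_p7 {p : ℕ} (h : p % 16 = 7) : ((p : ℕ) : ZMod 16) = 7 := by
  obtain ⟨c, hc⟩ : ∃ c, p = 16*c + 7 := ⟨p/16, by omega⟩
  subst hc; push_cast
  rw [show (16 : ZMod 16) = 0 by decide]; ring

private lemma cast_p11 {p : ℕ} (h : p % 16 = 11) : ((p : ℕ) : ZMod 16) = 11 := by
  obtain ⟨c, hc⟩ : ∃ c, p = 16*c + 11 := ⟨p/16, by omega⟩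
  subst hc; push_cast
  rw [show (16 : ZMod 16) = 0 by decide]; ring

private lemma odd_pow_mod2 {x n : ℕ} (h : x % 2 = 1) : x^n % 2 = 1 :=
  Nat.odd_iff.mp (Odd.pow (Nat.odd_iff.mpr h))

private lemma dioph_nat {p : ℕ} (hp : p.Prime) (hmod : p % 16 = 7 ∨ p % 16 = 11) :
    ∀ z x y : ℕ, 0 < x → 0 < y → x ^ 4 + p * y ^ 4 = z ^ 2 → False := by
  intro z
  induction z using Nat.strong_induction_on with
  | _ z IH =>
  intro x y hx hy heq
  have hp2 : p % 2 = 1 := by omega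
  have hpne2 : p ≠ 2 := by omega
  have hppos : 0 < p := by omega
  by_cases hg : Nat.gcd x y = 1
  case neg =>
    have hgpos : 0 < Nat.gcd x y := Nat.gcd_pos_of_pos_left y hx
    set g := Nat.gcd x y with hgdef
    have hg1 : 1 < g := by omega
    obtain ⟨x1, hx1⟩ : g ∣ x := Nat.gcd_dvd_left x y
    obtain ⟨y1, hy1⟩ : g ∣ y := Nat.gcd_dvd_right x y
    have hz4 : g^4 ∣ z^2 := by
      rw [← heq, hx1, hy1]; exact ⟨x1^4 + p*y1^4, by ring⟩
    have hz2 : g^2 ∣ z := by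
      have h2 : (g^2)^2 ∣ z^2 := by rw [show ((g^2)^2 : ℕ) = g^4 by ring]; exact hz4
      exact (Nat.pow_dvd_pow_iff (by norm_num)).mp h2
    obtain ⟨z1, hz1⟩ := hz2
    have heq1 : x1^4 + p*y1^4 = z1^2 := by
      apply Nat.eq_of_mul_eq_mul_left (show 0 < g^4 by positivity)
      calc g^4*(x1^4 + p*y1^4) = (g*x1)^4 + p*(g*y1)^4 := by ring
        _ = z^2 := by rw [← hx1, ← hy1]; exact heq
        _ = (g^2*z1)^2 := by rw [← hz1]
        _ = g^4*z1^2 := by ring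
    have hx1p : 0 < x1 := by
      rcases Nat.eq_zero_or_pos x1 with h | h
      · rw [h, mul_zero] at hx1; omega
      · exact h
    have hy1p : 0 < y1 := by
      rcases Nat.eq_zero_or_pos y1 with h | h
      · rw [h, mul_zero] at hy1; omega
      · exact h
    have hz1p : 0 < z1 := by
      rcases Nat.eq_zero_or_pos z1 with h | h
      · exfalso; rw [h] at heq1
        have h1 : 0 < x1^4 := by positivity
        simp at heq1; omega
      · exact h
    have hz1lt : z1 < z := by
      rw [hz1]
      have hgg : 4 ≤ g^2 := by nlinarith
      nlinarith
    exact IH z1 hz1lt x1 y1 hx1p hy1p heq1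
  case pos =>
  rcases Nat.mod_two_eq_zero_or_one x with hx2 | hx2 <;>
    rcases Nat.mod_two_eq_zero_or_one y with hy2 | hy2
  · -- x even, y even : contradicts coprimality
    have h2 : (2:ℕ) ∣ Nat.gcd x y :=
      Nat.dvd_gcd (Nat.dvd_of_mod_eq_zero hx2) (Nat.dvd_of_mod_eq_zero hy2)
    rw [hg] at h2; omega
  · -- x even, y odd
    obtain ⟨k, hk⟩ : ∃ k, x = 2*k := ⟨x/2, by omega⟩
    obtain ⟨j, hj⟩ : ∃ j, y = 2*j+1 := ⟨y/2, by omega⟩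
    have h16 := congrArg (Nat.cast (R := ZMod 16)) heq
    push_cast [hk, hj] at h16
    rcases hmod with h7 | h7
    · rw [cast_p7 h7] at h16; exact zm16_eo7 _ _ _ h16
    · rw [cast_p11 h7] at h16; exact zm16_eo11 _ _ _ h16
  · -- x odd, y even : MAIN CASE
    obtain ⟨e, m, hm2, hym⟩ := Nat.exists_eq_pow_mul_and_not_dvd
      (show y ≠ 0 by omega) 2 (by norm_num)
    have hm2' : m % 2 = 1 := by omega
    obtain ⟨b, rfl⟩ : ∃ b, e = b + 1 := by
      refine ⟨e - 1, ?_⟩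
      rcases Nat.eq_zero_or_pos e with h | h
      · exfalso; rw [h, pow_zero, one_mul] at hym; omega
      · omega
    have hx2sq : x^2 % 2 = 1 := odd_pow_mod2 hx2
    have hx4 : x^4 % 2 = 1 := odd_pow_mod2 hx2
    have hz2 : z % 2 = 1 := by
      have h2 : y^4 % 2 = 0 := by
        have : (2:ℕ) ∣ y^4 := dvd_pow (Nat.dvd_of_mod_eq_zero hy2) (by norm_num)
        omega
      have h3 : (p*y^4) % 2 = 0 := by
        have : (2:ℕ) ∣ p*y^4 :=
          Dvd.dvd.mul_left (dvd_pow (Nat.dvd_of_mod_eq_zero hy2) (by norm_num)) p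
        omega
      have h4 := Nat.add_mod (x^4) (p*y^4) 2
      rw [heq] at h4
      have h5 := Nat.pow_mod z 2 2
      rcases Nat.mod_two_eq_zero_or_one z with h | h
      · rw [h] at h5; simp at h5; omega
      · exact h
    have hzx2 : x^2 < z := by
      by_contra hc
      push_neg at hc
      have h1 : z^2 ≤ (x^2)^2 := Nat.pow_le_pow_left hc 2
      have h2 : ((x^2)^2 : ℕ) = x^4 := by ring
      have h3 : 0 < p*y^4 := by positivity
      omega
    obtain ⟨u, huz, hup⟩ : ∃ u, z = x^2 + 2*u ∧ 0 < u :=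
      ⟨(z - x^2)/2, by omega, by omega⟩
    set v := x^2 + u with hv
    have huv4 : 4*(u*v) = p*y^4 := by
      have e2 : z^2 = x^4 + 4*(u*v) := by rw [huz, hv]; ring
      omega
    have hq4b : (2:ℕ)^(4*b) = (2^b)^4 := by
      rw [show 4*b = b*4 by ring, pow_mul]
    have hq42 : (2:ℕ)^(4*b+2) = 4*(2^b)^4 := by
      rw [pow_add, hq4b]; ring
    have huv : u*v = 2^(4*b+2)*(p*m^4) := by
      apply Nat.eq_of_mul_eq_mul_left (show (0:ℕ) < 4 by norm_num)
      rw [huv4, hym, hq42, show (2:ℕ)^(b+1) = 2^b*2 from pow_succ 2 b]; ring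
    have hcozx : Nat.Coprime z x := by
      by_contra hnc
      obtain ⟨q, hq, hqz, hqx⟩ := Nat.Prime.not_coprime_iff_dvd.mp hnc
      have hzx4 : z^2 - x^4 = p*y^4 := by omega
      have hqpy : q ∣ p*y^4 := by
        have h1 : q ∣ z^2 := dvd_pow hqz (by norm_num)
        have h2 : q ∣ x^4 := dvd_pow hqx (by norm_num)
        have h3 := Nat.dvd_sub h1 h2
        rwa [hzx4] at h3
      have hqy : q ∣ y := by
        rcases (Nat.Prime.dvd_mul hq).mp hqpy with hqp | hqy4
        · have hqep : q = p := (Nat.prime_dvd_prime_iff_eq hq hp).mp hqp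
          subst hqep
          have h1 : q^2 ∣ z^2 := pow_dvd_pow_of_dvd hqz 2
          have h2 : q^2 ∣ x^4 := by
            have h2a : q^2 ∣ x^2 := pow_dvd_pow_of_dvd hqx 2
            exact h2a.trans (pow_dvd_pow x (by norm_num))
          have h3 : q^2 ∣ q*y^4 := by
            have := Nat.dvd_sub h1 h2
            rwa [hzx4] at this
          obtain ⟨w, hw⟩ := h3
          have hyq : y^4 = q*w := by
            apply Nat.eq_of_mul_eq_mul_left hq.pos
            rw [hw]; ring
          exact hq.dvd_of_dvd_pow (n := 4) ⟨w, hyq⟩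
        · exact hq.dvd_of_dvd_pow hqy4
      have : q ∣ Nat.gcd x y := Nat.dvd_gcd hqx hqy
      rw [hg] at this
      have := Nat.le_of_dvd one_pos this
      have h2q := hq.two_le
      omega
    have hcouv : Nat.Coprime u v := by
      by_contra hnc
      obtain ⟨q, hq, hqu, hqv⟩ := Nat.Prime.not_coprime_iff_dvd.mp hnc
      have hqx2 : q ∣ x^2 := by
        have := Nat.dvd_sub hqv hqu
        rwa [hv, Nat.add_sub_cancel] at this
      have hqz : q ∣ z := by
        rw [huz]
        exact dvd_add hqx2 (Dvd.dvd.mul_left hqu 2)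
      have hqx : q ∣ x := hq.dvd_of_dvd_pow hqx2
      have : q ∣ Nat.gcd z x := Nat.dvd_gcd hqz hqx
      rw [hcozx] at this
      have := Nat.le_of_dvd one_pos this
      have h2q := hq.two_le
      omega
    obtain ⟨s, t, hs2, ht2, hsp, htp, hcases⟩ := split3 hp hpne2 hm2' hcouv huv
    rcases hcases with ⟨hut, hvs⟩ | ⟨hut, hvs⟩ | ⟨hut, hvs⟩ | ⟨hut, hvs⟩
    · -- descent: u = 2^(4b+2)*(p*t^4), v = s^4
      have hs4 : s^4 = x^2 + 2^(4*b+2)*(p*t^4) := by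
        rw [← hvs, hv, hut]
      have hupos : (0:ℕ) < 2^(4*b+2)*(p*t^4) := by positivity
      have hxs : x < s^2 := by
        by_contra hc
        push_neg at hc
        have h1 : (s^2)^2 ≤ x^2 := Nat.pow_le_pow_left hc 2
        have h2 : ((s^2)^2:ℕ) = s^4 := by ring
        omega
      have hss2 : s^2 % 2 = 1 := odd_pow_mod2 hs2
      obtain ⟨u', hu'z, hu'p⟩ : ∃ u', s^2 = x + 2*u' ∧ 0 < u' :=
        ⟨(s^2-x)/2, by omega, by omega⟩
      set v' := x + u' with hv'
      have h4uv' : 4*(u'*v') = 2^(4*b+2)*(p*t^4) := by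
        have e2 : s^4 = x^2 + 4*(u'*v') := by
          rw [show (s:ℕ)^4 = (s^2)^2 by ring, hu'z, hv']; ring
        omega
      have huv' : u'*v' = 2^(4*b)*(p*t^4) := by
        apply Nat.eq_of_mul_eq_mul_left (show (0:ℕ) < 4 by norm_num)
        rw [h4uv', show (2:ℕ)^(4*b+2) = 4*2^(4*b) from by rw [pow_add]; ring]; ring
      have hcouv' : Nat.Coprime u' v' := by
        by_contra hnc
        obtain ⟨q, hq, hq1, hq2⟩ := Nat.Prime.not_coprime_iff_dvd.mp hnc
        have hqx : q ∣ x := by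
          have := Nat.dvd_sub hq2 hq1
          rwa [hv', Nat.add_sub_cancel] at this
        have hqs2 : q ∣ s^2 := by
          rw [hu'z]
          exact dvd_add hqx (Dvd.dvd.mul_left hq1 2)
        have hqs : q ∣ s := hq.dvd_of_dvd_pow hqs2
        have hqv : q ∣ v := by rw [hvs]; exact dvd_pow hqs (by norm_num)
        have hqu : q ∣ u := by
          rw [hut, ← h4uv']
          exact Dvd.dvd.mul_left (Dvd.dvd.mul_right hq1 v') 4
        have : q ∣ Nat.gcd u v := Nat.dvd_gcd hqu hqv
        rw [hcouv] at this
        have := Nat.le_of_dvd one_pos this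
        have h2q := hq.two_le
        omega
      obtain ⟨s', t', hs2', ht2', hsp', htp', hcases'⟩ := split3 hp hpne2 ht2 hcouv' huv'
      have hszlt : s < z := by
        have h1 : s ≤ s^4 := Nat.le_self_pow (by norm_num) s
        have h2 : s^4 = v := hvs.symm
        omega
      have hsum : u' + v' = s^2 := by omega
      rcases hcases' with ⟨h1, h2⟩ | ⟨h1, h2⟩ | ⟨h1, h2⟩ | ⟨h1, h2⟩
      · refine IH s hszlt s' (2^b*t') hsp' (by positivity) ?_
        rw [show ((2^b*t':ℕ))^4 = (2^b)^4*t'^4 by ring, ← hq4b, ← hsum, h1, h2]; ring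
      · refine IH s hszlt (2^b*t') s' (by positivity) hsp' ?_
        rw [show ((2^b*t':ℕ))^4 = (2^b)^4*t'^4 by ring, ← hq4b, ← hsum, h1, h2]
      · refine IH s hszlt (2^b*s') t' (by positivity) htp' ?_
        rw [show ((2^b*s':ℕ))^4 = (2^b)^4*s'^4 by ring, ← hq4b, ← hsum, h1, h2]; ring
      · refine IH s hszlt t' (2^b*s') htp' (by positivity) ?_
        rw [show ((2^b*s':ℕ))^4 = (2^b)^4*s'^4 by ring, ← hq4b, ← hsum, h1, h2]; ring
    · -- u = 2^(4b+2)*t^4, v = p*s^4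
      set ee := 2^b*t with hee
      have hkey : p*s^4 = x^2 + 4*ee^4 := by
        rw [← hvs, hv, hut, hee, show ((2^b*t:ℕ))^4 = (2^b)^4*t^4 by ring, ← hq4b,
          show (2:ℕ)^(4*b+2) = 4*2^(4*b) from by rw [pow_add]; ring]
        ring
      obtain ⟨x₁, hx₁⟩ : ∃ k, x = 2*k+1 := ⟨x/2, by omega⟩
      obtain ⟨s₁, hs₁⟩ : ∃ k, s = 2*k+1 := ⟨s/2, by omega⟩
      have h16 := congrArg (Nat.cast (R := ZMod 16)) hkey
      push_cast [hx₁, hs₁] at h16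
      rcases hmod with h7 | h7
      · rw [cast_p7 h7] at h16; exact zm16_c2_7 _ _ _ h16
      · rw [cast_p11 h7] at h16; exact zm16_c2_11 _ _ _ h16
    · -- u = p*t^4, v = 2^(4b+2)*s^4
      set k := 2^(2*b+1)*s^2 with hk
      have hk2 : k^2 = x^2 + p*t^4 := by
        have e1 : k^2 = 2^(4*b+2)*s^4 := by
          rw [hk, mul_pow, ← pow_mul, show (2*b+1)*2 = 4*b+2 by ring]; ring
        rw [e1, ← hvs, hv, hut]
      have hxk : x < k := by
        by_contra hc
        push_neg at hc
        have h1 : k^2 ≤ x^2 := Nat.pow_le_pow_left hc 2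
        have h2 : 0 < p*t^4 := by positivity
        omega
      obtain ⟨κ, hκ⟩ : ∃ κ, k = 2*κ := ⟨2^(2*b)*s^2, by rw [hk, pow_succ]; ring⟩
      obtain ⟨d, hdk, hdp⟩ : ∃ d, k = x + d ∧ 0 < d := ⟨k - x, by omega, by omega⟩
      have hdodd : d % 2 = 1 := by omega
      have hprod : d*(d+2*x) = p*t^4 := by
        have e2 : k^2 = x^2 + d*(d+2*x) := by rw [hdk]; ring
        omega
      have hcopdd : Nat.Coprime d (d+2*x) := by
        by_contra hnc
        obtain ⟨q, hq, hqd, hqd2⟩ := Nat.Prime.not_coprime_iff_dvd.mp hnc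
        have hq2x : q ∣ 2*x := by
          have := Nat.dvd_sub hqd2 hqd
          rwa [Nat.add_sub_cancel_left] at this
        have hqne2 : q ≠ 2 := by
          rintro rfl
          obtain ⟨w, hw⟩ := hqd; omega
        have hqx : q ∣ x := by
          rcases (Nat.Prime.dvd_mul hq).mp hq2x with h' | h'
          · exact absurd ((Nat.prime_dvd_prime_iff_eq hq Nat.prime_two).mp h') hqne2
          · exact h'
        have hqpt : q ∣ p*t^4 := by rw [← hprod]; exact Dvd.dvd.mul_right hqd _
        have hquv : q ∣ u ∧ q ∣ v := by
          rcases (Nat.Prime.dvd_mul hq).mp hqpt with h' | h'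
          · have : q = p := (Nat.prime_dvd_prime_iff_eq hq hp).mp h'
            subst this
            constructor
            · rw [hut]; exact Dvd.dvd.mul_right dvd_rfl _
            · rw [hv]
              exact dvd_add (dvd_pow hqx (by norm_num)) (by rw [hut]; exact Dvd.dvd.mul_right dvd_rfl _)
          · have hqt : q ∣ t := hq.dvd_of_dvd_pow h'
            constructor
            · rw [hut]; exact Dvd.dvd.mul_left (dvd_pow hqt (by norm_num)) p
            · rw [hv]
              refine dvd_add (dvd_pow hqx (by norm_num)) ?_
              rw [hut]; exact Dvd.dvd.mul_left (dvd_pow hqt (by norm_num)) p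
        have : q ∣ Nat.gcd u v := Nat.dvd_gcd hquv.1 hquv.2
        rw [hcouv] at this
        have := Nat.le_of_dvd one_pos this
        have h2q := hq.two_le
        omega
      have hsplit_eq : d*(d+2*x) = 2^0*(p*t^4) := by
        rw [pow_zero, one_mul]; exact hprod
      obtain ⟨s', t', hs2', ht2', _, _, hcases'⟩ := split3 hp hpne2 ht2 hcopdd hsplit_eq
      have hsum : d + (d+2*x) = 2*k := by omega
      have h2k : 2*k = 4*(2^b*s)^2 := by
        rw [hk, show (2:ℕ)^(2*b+1) = 2*(2^b)^2 from by
          rw [← pow_mul, show b*2 = 2*b by ring, pow_succ]; ring]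
        ring
      simp only [pow_zero, one_mul] at hcases'
      obtain ⟨x₁, hx₁⟩ : ∃ k, t' = 2*k+1 := ⟨t'/2, by omega⟩
      obtain ⟨s₁, hs₁⟩ : ∃ k, s' = 2*k+1 := ⟨s'/2, by omega⟩
      rcases hcases' with ⟨h1, h2⟩ | ⟨h1, h2⟩ | ⟨h1, h2⟩ | ⟨h1, h2⟩
      · -- d = p*t'^4, d+2x = s'^4
        have hkey : 4*(2^b*s)^2 = p*t'^4 + s'^4 := by rw [← h2k, ← hsum, h2, h1]
        have h16 := congrArg (Nat.cast (R := ZMod 16)) hkey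
        push_cast [hx₁, hs₁] at h16
        rcases hmod with h7 | h7
        · rw [cast_p7 h7] at h16; exact (zm16_c3_7 _ _ _).2 h16
        · rw [cast_p11 h7] at h16; exact (zm16_c3_11 _ _ _).2 h16
      · -- d = t'^4, d+2x = p*s'^4
        have hkey : 4*(2^b*s)^2 = t'^4 + p*s'^4 := by rw [← h2k, ← hsum, h2, h1]
        have h16 := congrArg (Nat.cast (R := ZMod 16)) hkey
        push_cast [hx₁, hs₁] at h16
        rcases hmod with h7 | h7
        · rw [cast_p7 h7] at h16; exact (zm16_c3_7 _ _ _).1 h16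
        · rw [cast_p11 h7] at h16; exact (zm16_c3_11 _ _ _).1 h16
      · -- d = p*t'^4, d+2x = s'^4
        have hkey : 4*(2^b*s)^2 = p*t'^4 + s'^4 := by rw [← h2k, ← hsum, h2, h1]
        have h16 := congrArg (Nat.cast (R := ZMod 16)) hkey
        push_cast [hx₁, hs₁] at h16
        rcases hmod with h7 | h7
        · rw [cast_p7 h7] at h16; exact (zm16_c3_7 _ _ _).2 h16
        · rw [cast_p11 h7] at h16; exact (zm16_c3_11 _ _ _).2 h16
      · -- d = t'^4, d+2x = p*s'^4
        have hkey : 4*(2^b*s)^2 = t'^4 + p*s'^4 := by rw [← h2k, ← hsum, h2, h1]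
        have h16 := congrArg (Nat.cast (R := ZMod 16)) hkey
        push_cast [hx₁, hs₁] at h16
        rcases hmod with h7 | h7
        · rw [cast_p7 h7] at h16; exact (zm16_c3_7 _ _ _).1 h16
        · rw [cast_p11 h7] at h16; exact (zm16_c3_11 _ _ _).1 h16
    · -- u = t^4, v = 2^(4b+2)*(p*s^4)
      have hkey : 4*(2^(4*b)*(p*s^4)) = x^2 + t^4 := by
        rw [show (4:ℕ)*(2^(4*b)*(p*s^4)) = (4*2^(4*b))*(p*s^4) by ring,
          show (4:ℕ)*2^(4*b) = 2^(4*b+2) from by rw [pow_add]; ring, ← hut, ← hv, hvs]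
      obtain ⟨x₁, hx₁⟩ : ∃ k, x = 2*k+1 := ⟨x/2, by omega⟩
      obtain ⟨t₁, ht₁⟩ : ∃ k, t = 2*k+1 := ⟨t/2, by omega⟩
      have h4c := congrArg (Nat.cast (R := ZMod 4)) hkey
      push_cast [hx₁, ht₁] at h4c
      rw [show ((4:ZMod 4)) = 0 by decide, zero_mul] at h4c
      exact zm4_c4 _ _ h4c.symm
  · -- x odd, y odd
    obtain ⟨k, hk⟩ : ∃ k, x = 2*k+1 := ⟨x/2, by omega⟩
    obtain ⟨j, hj⟩ : ∃ j, y = 2*j+1 := ⟨y/2, by omega⟩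
    have h16 := congrArg (Nat.cast (R := ZMod 16)) heq
    push_cast [hk, hj] at h16
    rcases hmod with h7 | h7
    · rw [cast_p7 h7] at h16; exact zm16_oo7 _ _ _ h16
    · rw [cast_p11 h7] at h16; exact zm16_oo11 _ _ _ h16

/-! ### bridge from rationals to naturals -/

private lemma dioph_rat {p : ℕ} (hp : p.Prime) (hmod : p % 16 = 7 ∨ p % 16 = 11)
    {w t z₀ : ℚ} (hw : w ≠ 0) (ht : t ≠ 0) (h : z₀^2 = w^4 + (p:ℚ)*t^4) : False := by
  set W : ℤ := w.num * t.den with hW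
  set T : ℤ := t.num * w.den with hT
  set N : ℤ := W^4 + (p:ℤ)*T^4 with hN
  have hwd : ((w.den : ℚ)) ≠ 0 := by
    exact_mod_cast (Nat.cast_ne_zero (R := ℚ)).mpr w.den_nz
  have htd : ((t.den : ℚ)) ≠ 0 := by
    exact_mod_cast (Nat.cast_ne_zero (R := ℚ)).mpr t.den_nz
  set D : ℚ := (w.den : ℚ) * (t.den : ℚ) with hD
  have hζ : (z₀ * D^2)^2 = (N:ℚ) := by
    have h1 : (w.num : ℚ) = w * w.den := (Rat.mul_den_eq_num w).symm
    have h2 : (t.num : ℚ) = t * t.den := (Rat.mul_den_eq_num t).symm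
    rw [hN, hD]
    push_cast [hW, hT]
    rw [h1, h2]
    linear_combination ((w.den:ℚ)*(t.den:ℚ))^4 * h
  have hint : IsIntegral ℤ (z₀ * D^2) := by
    refine ⟨X^2 - C N, monic_X_pow_sub_C N (by norm_num), ?_⟩
    simp only [eval₂_sub, eval₂_X_pow, eval₂_C]
    rw [hζ]; ring_nf; simp
  obtain ⟨zI, hzI⟩ := IsIntegrallyClosed.isIntegral_iff.mp hint
  have hZeq : zI^2 = N := by
    have : ((zI:ℚ))^2 = (N:ℚ) := by
      rw [show ((zI:ℚ)) = algebraMap ℤ ℚ zI from rfl, hzI]; exact hζ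
    exact_mod_cast this
  have hW0 : W ≠ 0 := mul_ne_zero (Rat.num_ne_zero.mpr hw) (Int.natCast_ne_zero.mpr t.den_nz)
  have hT0 : T ≠ 0 := mul_ne_zero (Rat.num_ne_zero.mpr ht) (Int.natCast_ne_zero.mpr w.den_nz)
  -- to naturals
  have habs : ∀ a : ℤ, ((a.natAbs:ℤ))^4 = a^4 := by
    intro a
    rw [show ((a.natAbs:ℤ))^4 = (((a.natAbs:ℤ))^2)^2 by ring, Int.natAbs_sq,
      show (a^2)^2 = a^4 by ring]
  have habs4 : ∀ a : ℤ, |a|^4 = a^4 := fun a => by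
    rw [show (4:ℕ) = 2*2 from rfl, pow_mul, sq_abs, ← pow_mul]
  have heqN : W.natAbs^4 + p*T.natAbs^4 = zI.natAbs^2 := by
    have : ((W.natAbs^4 + p*T.natAbs^4 : ℕ) : ℤ) = ((zI.natAbs^2 : ℕ) : ℤ) := by
      push_cast
      rw [habs4 W, habs4 T, sq_abs, hZeq, hN]
    exact_mod_cast this
  exact dioph_nat hp hmod zI.natAbs W.natAbs T.natAbs
    (by simpa [Int.natAbs_pos] using hW0) (by simpa [Int.natAbs_pos] using hT0) heqN

/-! ### polynomial helpers -/

private lemma expand_deg3 (P : ℚ[X]) (h : P.natDegree < 4) :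
    P = C (P.coeff 0) + C (P.coeff 1)*X + C (P.coeff 2)*X^2 + C (P.coeff 3)*X^3 := by
  ext n
  rcases n with _|_|_|_|n
  · simp
  · simp [coeff_C]
  · simp [coeff_C, coeff_X_pow]
  · simp [coeff_C, coeff_X_pow]
  · simp [coeff_C, coeff_X_pow]
    exact coeff_eq_zero_of_natDegree_lt (by omega)

private lemma expand_deg2 (P : ℚ[X]) (h : P.natDegree < 3) :
    P = C (P.coeff 2)*X^2 + C (P.coeff 1)*X + C (P.coeff 0) := by
  ext n
  rcases n with _|_|_|n
  · simp [coeff_C]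
  · simp [coeff_C, coeff_X_pow]
  · simp [coeff_C, coeff_X_pow]
  · simp [coeff_C, coeff_X_pow]
    exact coeff_eq_zero_of_natDegree_lt (by omega)

private lemma exists_half_factor {h : ℚ[X]} (h0 : h ≠ 0) (hu : ¬IsUnit h)
    (hnir : ¬Irreducible h) :
    ∃ F : ℚ[X], Irreducible F ∧ F ∣ h ∧ 2 * F.natDegree ≤ h.natDegree := by
  rw [irreducible_iff] at hnir
  push_neg at hnir
  obtain ⟨A, B, hAB, hA, hB⟩ := hnir hu
  have hA0 : A ≠ 0 := by rintro rfl; rw [zero_mul] at hAB; exact h0 hAB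
  have hB0 : B ≠ 0 := by rintro rfl; rw [mul_zero] at hAB; exact h0 hAB
  have hdegs : A.natDegree + B.natDegree = h.natDegree := by
    rw [hAB, natDegree_mul hA0 hB0]
  rcases le_total A.natDegree B.natDegree with hle | hle
  · obtain ⟨F, hF, hFd⟩ := WfDvdMonoid.exists_irreducible_factor hA hA0
    refine ⟨F, hF, hFd.trans ⟨B, hAB⟩, ?_⟩
    have := natDegree_le_of_dvd hFd hA0
    omega
  · obtain ⟨F, hF, hFd⟩ := WfDvdMonoid.exists_irreducible_factor hB hB0
    refine ⟨F, hF, hFd.trans ⟨A, by rw [hAB]; ring⟩, ?_⟩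
    have := natDegree_le_of_dvd hFd hB0
    omega

/-- A polynomial `f ∈ R[x]` is `k`-superirreducible over `R` if it is irreducible and
`f(g(x))` is irreducible for every nonconstant `g ∈ R[x]` of degree at most `k`. -/
def IsSuperirreducible (R : Type*) [CommRing R] [IsDomain R] (k : ℕ) (f : Polynomial R) : Prop :=
  Irreducible f ∧ ∀ g : Polynomial R, 0 < g.natDegree → g.natDegree ≤ k →
    Irreducible (f.comp g)

theorem x4_add_p_superirreducible (p : ℕ) (hp : p.Prime)
    (hmod : p % 16 = 7 ∨ p % 16 = 11)
    (hirr : Irreducible (X ^ 4 + C (p : ℚ))) :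
    IsSuperirreducible ℚ 2 (X ^ 4 + C (p : ℚ)) := by
  refine ⟨hirr, fun g hg1 hg2 => ?_⟩
  have hqdeg : (X^4 + C (p:ℚ)).natDegree = 4 := natDegree_X_pow_add_C
  have hmon : (X^4 + C (p:ℚ)).Monic := monic_X_pow_add_C _ (by norm_num)
  by_contra hnir
  have hcdeg : ((X^4 + C (p:ℚ)).comp g).natDegree = 4 * g.natDegree := by
    rw [natDegree_comp, hqdeg]
  have h0 : (X^4 + C (p:ℚ)).comp g ≠ 0 := by
    intro h
    rw [h] at hcdeg; simp at hcdeg; omega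
  have hnu : ¬IsUnit ((X^4 + C (p:ℚ)).comp g) :=
    not_isUnit_of_natDegree_pos _ (by omega)
  obtain ⟨F, hFirr, hFdvd, hFdeg⟩ := exists_half_factor h0 hnu hnir
  haveI : Fact (Irreducible F) := ⟨hFirr⟩
  set θ : AdjoinRoot F := AdjoinRoot.root F with hθdef
  have hθ : aeval θ ((X^4 + C (p:ℚ)).comp g) = 0 := by
    obtain ⟨Q, hQ⟩ := hFdvd
    rw [hQ, map_mul]
    have hzF : aeval θ F = 0 := by rw [hθdef]; exact AdjoinRoot.aeval_algHom_eq_zero F (AlgHom.id ℚ _)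
    rw [hzF, zero_mul]
  set α : AdjoinRoot F := aeval θ g with hα
  have hαf : aeval α (X^4 + C (p:ℚ)) = 0 := by rw [hα, ← aeval_comp]; exact hθ
  have hmin : minpoly ℚ α = X^4 + C (p:ℚ) :=
    (minpoly.eq_of_irreducible_of_monic hirr hαf hmon).symm
  have hF0 : F ≠ 0 := hFirr.ne_zero
  haveI : FiniteDimensional ℚ (AdjoinRoot F) := PowerBasis.finite (AdjoinRoot.powerBasis hF0)
  have hrank : Module.finrank ℚ (AdjoinRoot F) = F.natDegree := by
    rw [(AdjoinRoot.powerBasis hF0).finrank, AdjoinRoot.powerBasis_dim]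
  have h4le : 4 ≤ F.natDegree := by
    have h1 := minpoly.natDegree_le (A := ℚ) α
    rw [hmin, hqdeg, hrank] at h1
    exact h1
  rw [hcdeg] at hFdeg
  have hdg : g.natDegree = 2 := by omega
  have hFdeg4 : F.natDegree = 4 := by omega
  -- the lift from AdjoinRoot (X^4+p) is surjective
  haveI : Fact (Irreducible (X^4 + C (p:ℚ))) := ⟨hirr⟩
  have hq0 : (X^4 + C (p:ℚ)) ≠ 0 := hmon.ne_zero
  haveI : FiniteDimensional ℚ (AdjoinRoot (X^4 + C (p:ℚ))) :=
    PowerBasis.finite (AdjoinRoot.powerBasis hq0)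
  set φ : AdjoinRoot (X^4 + C (p:ℚ)) →ₐ[ℚ] AdjoinRoot F :=
    AdjoinRoot.liftAlgHom _ (Algebra.ofId ℚ _) α hαf with hφdef
  have hφinj : Function.Injective φ := φ.toRingHom.injective
  have hranks : Module.finrank ℚ (AdjoinRoot (X^4 + C (p:ℚ)))
      = Module.finrank ℚ (AdjoinRoot F) := by
    rw [hrank, hFdeg4, (AdjoinRoot.powerBasis hq0).finrank, AdjoinRoot.powerBasis_dim, hqdeg]
  have hφsurj : Function.Surjective φ :=
    (LinearMap.injective_iff_surjective_of_finrank_eq_finrank (f := φ.toLinearMap) hranks).mp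
      hφinj
  obtain ⟨ξ₀, hξ₀⟩ := hφsurj θ
  obtain ⟨P, hP⟩ := AdjoinRoot.mk_surjective ξ₀
  have hθP : aeval α P = θ := by
    rw [← hξ₀, ← hP, hφdef]; rfl
  -- coefficients of g
  set a := g.coeff 2 with hadef
  set bb := g.coeff 1 with hbbdef
  set c := g.coeff 0 with hcdef
  have hgne : g ≠ 0 := by intro h; rw [h] at hdg; simp at hdg
  have ha : a ≠ 0 := by
    have h1 : g.leadingCoeff ≠ 0 := leadingCoeff_ne_zero.mpr hgne
    rwa [Polynomial.leadingCoeff, hdg] at h1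
  have hgexp : g = C a * X^2 + C bb * X + C c := expand_deg2 g (by omega)
  have hαθ : α = algebraMap ℚ _ a * θ^2 + algebraMap ℚ _ bb * θ + algebraMap ℚ _ c := by
    rw [hα]
    conv_lhs => rw [hgexp]
    simp [map_add, map_mul, aeval_C]
  set r : ℚ := bb^2 - 4*a*c with hrdef
  set s : ℚ := 4*a with hsdef
  set P₁ : ℚ[X] := C (2*a) * P + C bb with hP₁def
  have hkeyΩ : aeval α (P₁^2 - (C r + C s * X)) = 0 := by
    have h2θ : aeval α P₁ = algebraMap ℚ _ (2*a) * θ + algebraMap ℚ _ bb := by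
      rw [hP₁def, map_add, map_mul, aeval_C, aeval_C, hθP]
    rw [map_sub, map_pow, h2θ]
    simp only [map_add, map_mul, aeval_C, aeval_X]
    rw [hαθ, hrdef, hsdef]
    simp only [map_sub, map_add, map_mul, map_pow, map_ofNat]
    ring
  have hdvd : (X^4 + C (p:ℚ)) ∣ (P₁^2 - (C r + C s * X)) := by
    rw [← hmin]; exact minpoly.dvd ℚ α hkeyΩ
  set P₂ : ℚ[X] := P₁ %ₘ (X^4 + C (p:ℚ)) with hP₂def
  set K : ℚ[X] := P₁ /ₘ (X^4 + C (p:ℚ)) with hKdef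
  have hP2eq : P₂ = P₁ - (X^4 + C (p:ℚ))*K := by
    rw [eq_sub_iff_add_eq, hP₂def, hKdef]
    exact modByMonic_add_div P₁ _
  have hdvd2 : (X^4 + C (p:ℚ)) ∣ (P₂^2 - (C r + C s * X)) := by
    have hident : P₂^2 - (C r + C s * X) =
        (P₁^2 - (C r + C s * X)) - (X^4 + C (p:ℚ))*(2*P₁*K - (X^4 + C (p:ℚ))*K^2) := by
      rw [hP2eq]; ring
    rw [hident]
    exact dvd_sub hdvd (Dvd.intro _ rfl)
  have hdegP₂ : P₂.natDegree < 4 := by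
    have h1 := natDegree_modByMonic_lt P₁ hmon (fun h => by
      have := hqdeg; rw [h] at this; simp at this)
    rwa [hqdeg] at h1
  set u := P₂.coeff 0 with hudef
  set v := P₂.coeff 1 with hvdef
  set w := P₂.coeff 2 with hwdef
  set tt := P₂.coeff 3 with httdef
  have hP₂exp : P₂ = C u + C v*X + C w*X^2 + C tt*X^3 := expand_deg3 P₂ hdegP₂
  have hGexp : P₂^2 - (C r + C s*X) =
      C (u^2-r) + C (2*u*v-s)*X + C (v^2+2*u*w)*X^2 + C (2*u*tt+2*v*w)*X^3
        + C (w^2+2*v*tt)*X^4 + C (2*w*tt)*X^5 + C (tt^2)*X^6 := by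
    conv_lhs => rw [hP₂exp]
    simp only [map_sub, map_add, map_mul, map_pow, map_ofNat]
    ring
  obtain ⟨Q, hQ⟩ := hdvd2
  have hQ3 : ∀ j, 3 ≤ j → Q.coeff j = 0 := by
    rcases eq_or_ne Q 0 with rfl | hQ0
    · intro j _; simp
    · intro j hj
      apply coeff_eq_zero_of_natDegree_lt
      have hdegG : (P₂^2 - (C r + C s*X)).natDegree ≤ 6 := by
        refine le_trans (natDegree_sub_le _ _) ?_
        refine max_le ?_ ?_
        · rw [natDegree_pow]; omega
        · refine le_trans (natDegree_add_le _ _) (max_le ?_ ?_)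
          · simp
          · refine le_trans (natDegree_mul_le) ?_
            simp [natDegree_X]
      have hfQdeg : (X^4 + C (p:ℚ)).natDegree + Q.natDegree ≤ 6 := by
        rw [← natDegree_mul hq0 hQ0, ← hQ]; exact hdegG
      rw [hqdeg] at hfQdeg; omega
  have hco : ∀ k, (P₂^2 - (C r + C s*X)).coeff k
      = (p:ℚ)*Q.coeff k + (if 4 ≤ k then Q.coeff (k-4) else 0) := by
    intro k
    rw [hQ, show (X^4 + C (p:ℚ))*Q = Q*X^4 + C (p:ℚ)*Q by ring, coeff_add,
      coeff_mul_X_pow', coeff_C_mul]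
    ring
  have hGc1 : (P₂^2 - (C r + C s*X)).coeff 1 = 2*u*v-s := by
    rw [hGexp]; simp only [coeff_add, coeff_C_mul, coeff_X_pow, coeff_X, coeff_C]; norm_num
  have hGc2 : (P₂^2 - (C r + C s*X)).coeff 2 = v^2+2*u*w := by
    rw [hGexp]; simp only [coeff_add, coeff_C_mul, coeff_X_pow, coeff_X, coeff_C]; norm_num
  have hGc3 : (P₂^2 - (C r + C s*X)).coeff 3 = 2*u*tt+2*v*w := by
    rw [hGexp]; simp only [coeff_add, coeff_C_mul, coeff_X_pow, coeff_X, coeff_C]; norm_num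
  have hGc5 : (P₂^2 - (C r + C s*X)).coeff 5 = 2*w*tt := by
    rw [hGexp]; simp only [coeff_add, coeff_C_mul, coeff_X_pow, coeff_X, coeff_C]; norm_num
  have hGc6 : (P₂^2 - (C r + C s*X)).coeff 6 = tt^2 := by
    rw [hGexp]; simp only [coeff_add, coeff_C_mul, coeff_X_pow, coeff_X, coeff_C]; norm_num
  have hE3 : 2*u*tt + 2*v*w = 0 := by
    have h1 := hco 3
    rw [hGc3] at h1
    simp [hQ3 3 le_rfl] at h1
    exact h1
  have hE2 : v^2 + 2*u*w = (p:ℚ)*tt^2 := by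
    have h1 := hco 2
    have h2 := hco 6
    rw [hGc2] at h1
    rw [hGc6] at h2
    simp [hQ3 6 (by norm_num)] at h1 h2
    rw [h1, h2]
  have hE1 : 2*u*v - s = (p:ℚ)*(2*w*tt) := by
    have h1 := hco 1
    have h2 := hco 5
    rw [hGc1] at h1
    rw [hGc5] at h2
    simp [hQ3 5 (by norm_num)] at h1 h2
    rw [h1, h2]
  have hs0 : s ≠ 0 := by
    rw [hsdef]; exact mul_ne_zero (by norm_num) ha
  have hw0 : w ≠ 0 := by
    intro hww
    apply hs0
    have hE3' := hE3
    rw [hww] at hE3'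
    have h3 : u * tt = 0 := by linarith
    have hs' : s = 2*u*v - (p:ℚ)*(2*w*tt) := by linarith
    rcases mul_eq_zero.mp h3 with h4 | h4
    · rw [hs', h4, hww]; ring
    · have hE2' := hE2
      rw [hww, h4] at hE2'
      simp at hE2'
      rw [hs', h4, hE2', hww]; ring
  have htt0 : tt ≠ 0 := by
    intro httz
    apply hs0
    have hE3' := hE3
    rw [httz] at hE3'
    have h3 : v * w = 0 := by linarith
    have hs' : s = 2*u*v - (p:ℚ)*(2*w*tt) := by linarith
    rcases mul_eq_zero.mp h3 with h4 | h4
    · rw [hs', h4, httz]; ring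
    · exact absurd h4 hw0
  exact dioph_rat hp hmod hw0 htt0
    (z₀ := v*tt - w^2) (by linear_combination tt^2 * hE2 - w*tt*hE3)
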